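/- Let F be an algebraically closed field, f(ξ) ∈ F[ξ] a nonzero polynomial with zero constant term, and γ ∈ F. For x in the split octonion algebra O over F, the equation f(x) = γ·1 + u₁ holds if and only if there exists ξ₁ ∈ F with f(ξ₁) = γ, f′(ξ₁) ≠ 0, and x = ξ₁·1 + (1/f′(ξ₁))·u₁. -/
import Mathlib


noncomputable section

/-- The split octonion algebra over `F`, given by Zorn vector matrices
`(x1, u; v, x2)` with `x1, x2 ∈ F` and `u, v ∈ F³`. -/
@[ext]
structure SplitOctonion (F : Type*) where
  x1 : F
  u : Fin 3 → F
  v : Fin 3 → F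
  x2 : F

namespace SplitOctonion

variable {F : Type*} [Field F]

/-- Dot product on `F³`. -/
def dot (x y : Fin 3 → F) : F := x 0 * y 0 + x 1 * y 1 + x 2 * y 2

/-- Cross product on `F³`. -/
def cross (x y : Fin 3 → F) : Fin 3 → F :=
  ![x 1 * y 2 - x 2 * y 1, x 2 * y 0 - x 0 * y 2, x 0 * y 1 - x 1 * y 0]

instance : Zero (SplitOctonion F) := ⟨⟨0, 0, 0, 0⟩⟩
instance : One (SplitOctonion F) := ⟨⟨1, 0, 0, 1⟩⟩
instance : Add (SplitOctonion F) :=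
  ⟨fun x y => ⟨x.x1 + y.x1, x.u + y.u, x.v + y.v, x.x2 + y.x2⟩⟩
instance : Neg (SplitOctonion F) := ⟨fun x => ⟨-x.x1, -x.u, -x.v, -x.x2⟩⟩
instance : SMul F (SplitOctonion F) :=
  ⟨fun c x => ⟨c * x.x1, c • x.u, c • x.v, c * x.x2⟩⟩

/-- Zorn vector matrix multiplication. -/
instance : Mul (SplitOctonion F) :=
  ⟨fun x y => ⟨x.x1 * y.x1 + dot x.u y.v,
    x.x1 • y.u + y.x2 • x.u - cross x.v y.v,
    y.x1 • x.v + x.x2 • y.v + cross x.u y.u,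
    x.x2 * y.x2 + dot x.v y.u⟩⟩

@[simp] lemma zero_x1 : (0 : SplitOctonion F).x1 = 0 := rfl
@[simp] lemma zero_u : (0 : SplitOctonion F).u = 0 := rfl
@[simp] lemma zero_v : (0 : SplitOctonion F).v = 0 := rfl
@[simp] lemma zero_x2 : (0 : SplitOctonion F).x2 = 0 := rfl
@[simp] lemma add_x1 (x y : SplitOctonion F) : (x + y).x1 = x.x1 + y.x1 := rfl
@[simp] lemma add_u (x y : SplitOctonion F) : (x + y).u = x.u + y.u := rfl
@[simp] lemma add_v (x y : SplitOctonion F) : (x + y).v = x.v + y.v := rfl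
@[simp] lemma add_x2 (x y : SplitOctonion F) : (x + y).x2 = x.x2 + y.x2 := rfl
@[simp] lemma neg_x1 (x : SplitOctonion F) : (-x).x1 = -x.x1 := rfl
@[simp] lemma neg_u (x : SplitOctonion F) : (-x).u = -x.u := rfl
@[simp] lemma neg_v (x : SplitOctonion F) : (-x).v = -x.v := rfl
@[simp] lemma neg_x2 (x : SplitOctonion F) : (-x).x2 = -x.x2 := rfl
@[simp] lemma smul_x1 (c : F) (x : SplitOctonion F) : (c • x).x1 = c * x.x1 := rfl
@[simp] lemma smul_u (c : F) (x : SplitOctonion F) : (c • x).u = c • x.u := rfl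
@[simp] lemma smul_v (c : F) (x : SplitOctonion F) : (c • x).v = c • x.v := rfl
@[simp] lemma smul_x2 (c : F) (x : SplitOctonion F) : (c • x).x2 = c * x.x2 := rfl

instance : AddCommGroup (SplitOctonion F) where
  add_assoc x y z := by ext <;> simp [add_assoc]
  zero_add x := by ext <;> simp
  add_zero x := by ext <;> simp
  add_comm x y := by ext <;> simp [add_comm]
  neg_add_cancel x := by ext <;> simp
  nsmul := nsmulRec
  zsmul := zsmulRec

instance : Module F (SplitOctonion F) where
  one_smul x := by ext <;> simp
  mul_smul c d x := by ext <;> simp [mul_assoc, mul_smul]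
  smul_zero c := by ext <;> simp
  smul_add c x y := by ext <;> simp [mul_add, smul_add]
  add_smul c d x := by ext <;> simp [add_mul, add_smul]
  zero_smul x := by ext <;> simp

/-- Powers of a single octonion (well defined by power-associativity). -/
def npow (x : SplitOctonion F) : ℕ → SplitOctonion F
  | 0 => 1
  | n + 1 => npow x n * x

instance : Pow (SplitOctonion F) ℕ := ⟨npow⟩

/-- Substitution of an octonion into a polynomial over `F`:
`f(x) = αₙ xⁿ + ⋯ + α₁ x + α₀ • 1`. -/
def peval (f : Polynomial F) (x : SplitOctonion F) : SplitOctonion F :=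
  f.sum fun i c => c • x ^ i

/-- The octonion `e₁`. -/
def e1 : SplitOctonion F := ⟨1, 0, 0, 0⟩
/-- The octonion `e₂`. -/
def e2 : SplitOctonion F := ⟨0, 0, 0, 1⟩
/-- The octonion `u₁`. -/
def u1 : SplitOctonion F := ⟨0, ![1, 0, 0], 0, 0⟩

/-- Conjugation on `O`. -/
def conj (x : SplitOctonion F) : SplitOctonion F := ⟨x.x2, -x.u, -x.v, x.x1⟩

/-- The norm of an octonion. -/
def normO (x : SplitOctonion F) : F := x.x1 * x.x2 - dot x.u x.v

/-- The trace of an octonion. -/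
def trO (x : SplitOctonion F) : F := x.x1 + x.x2

/-- `g` is an `F`-algebra automorphism of `O`: a linear bijection preserving
multiplication (and the unit). -/
def IsAlgAut (g : SplitOctonion F ≃ₗ[F] SplitOctonion F) : Prop :=
  g 1 = 1 ∧ ∀ x y, g (x * y) = g x * g y

end SplitOctonion


namespace SplitOctonion

open Polynomial

variable {F : Type*} [Field F]

@[simp] lemma one_x1 : (1 : SplitOctonion F).x1 = 1 := rfl
@[simp] lemma one_u : (1 : SplitOctonion F).u = 0 := rfl
@[simp] lemma one_v : (1 : SplitOctonion F).v = 0 := rfl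
@[simp] lemma one_x2 : (1 : SplitOctonion F).x2 = 1 := rfl

@[simp] lemma mul_x1 (x y : SplitOctonion F) :
    (x * y).x1 = x.x1 * y.x1 + dot x.u y.v := rfl
@[simp] lemma mul_u (x y : SplitOctonion F) :
    (x * y).u = x.x1 • y.u + y.x2 • x.u - cross x.v y.v := rfl
@[simp] lemma mul_v (x y : SplitOctonion F) :
    (x * y).v = y.x1 • x.v + x.x2 • y.v + cross x.u y.u := rfl
@[simp] lemma mul_x2 (x y : SplitOctonion F) :
    (x * y).x2 = x.x2 * y.x2 + dot x.v y.u := rfl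

@[simp] lemma pow_zero' (x : SplitOctonion F) : x ^ (0 : ℕ) = 1 := rfl
lemma pow_succ' (x : SplitOctonion F) (n : ℕ) : x ^ (n + 1) = x ^ n * x := rfl

/-- The element `ξ•1 + t•u₁`. -/
def sel (ξ t : F) : SplitOctonion F := ⟨ξ, t • ![1, 0, 0], 0, ξ⟩

@[simp] lemma sel_x1 (ξ t : F) : (sel ξ t).x1 = ξ := rfl
@[simp] lemma sel_u (ξ t : F) : (sel ξ t).u = t • ![1, 0, 0] := rfl
@[simp] lemma sel_v (ξ t : F) : (sel ξ t).v = 0 := rfl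
@[simp] lemma sel_x2 (ξ t : F) : (sel ξ t).x2 = ξ := rfl

lemma sel_eq_sel {a b c d : F} (h1 : a = c) (h2 : b = d) : sel a b = sel c d := by
  rw [h1, h2]

lemma sel_inj {a b c d : F} (h : sel a b = sel c d) : a = c ∧ b = d := by
  refine ⟨congrArg x1 h, ?_⟩
  have := congrFun (congrArg u h) 0
  simpa using this

lemma smul_one_add_smul_u1 (a b : F) :
    a • (1 : SplitOctonion F) + b • u1 = sel a b := by
  ext i <;> simp [u1] <;> first | ring1 | (fin_cases i <;> simp)

lemma sel_one : sel (1 : F) 0 = 1 := by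
  ext <;> simp

lemma sel_mul (ξ t ξ' t' : F) :
    sel ξ t * sel ξ' t' = sel (ξ * ξ') (ξ * t' + ξ' * t) := by
  ext i <;> simp [cross, dot] <;> first | ring1 | (fin_cases i <;> simp <;> ring)

lemma sel_pow (ξ t : F) : ∀ n : ℕ, (sel ξ t) ^ n = sel (ξ ^ n) ((n : F) * ξ ^ (n - 1) * t)
  | 0 => by simpa using sel_one.symm
  | n + 1 => by
      rw [pow_succ', sel_pow ξ t n, sel_mul]
      refine sel_eq_sel (by rw [pow_succ]) ?_
      cases n with
      | zero => simp
      | succ m => push_cast; ring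

lemma smul_sel (c a b : F) : c • sel a b = sel (c * a) (c * b) := by
  ext i <;> simp [smul_smul] <;> first | ring1 | (fin_cases i <;> simp <;> ring)

lemma sel_add (a b c d : F) : sel a b + sel c d = sel (a + c) (b + d) := by
  ext i <;> simp [add_smul] <;> first | ring1 | (fin_cases i <;> simp <;> ring)

lemma peval_add (p q : Polynomial F) (x : SplitOctonion F) :
    peval (p + q) x = peval p x + peval q x := by
  unfold peval
  exact Polynomial.sum_add_index p q _ (fun i => zero_smul F _)
    (fun a b c => add_smul b c _)

lemma peval_monomial (n : ℕ) (c : F) (x : SplitOctonion F) :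
    peval (Polynomial.monomial n c) x = c • x ^ n :=
  Polynomial.sum_monomial_index c _ (zero_smul F _)

lemma peval_sel (f : Polynomial F) (ξ t : F) :
    peval f (sel ξ t) = sel (f.eval ξ) (t * (derivative f).eval ξ) := by
  induction f using Polynomial.induction_on' with
  | add p q hp hq =>
      rw [peval_add, hp, hq, sel_add]
      refine (sel_eq_sel (by simp) (by simp [mul_add])).symm
  | monomial n c =>
      rw [peval_monomial, sel_pow, smul_sel]
      refine sel_eq_sel (by simp) ?_
      simp [derivative_monomial]
      ring

lemma smul_one_add_smul_mul (a b : F) (x : SplitOctonion F) :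
    (a • 1 + b • x) * x = (-(b * normO x)) • 1 + (a + b * trO x) • x := by
  ext i <;> simp [dot, cross, normO, trO] <;>
    first | ring1 | (fin_cases i <;> simp <;> ring)

lemma exists_pow_lin (x : SplitOctonion F) : ∀ n : ℕ, ∃ a b : F, x ^ n = a • 1 + b • x
  | 0 => ⟨1, 0, by simp⟩
  | n + 1 => by
      obtain ⟨a, b, h⟩ := exists_pow_lin x n
      exact ⟨-(b * normO x), a + b * trO x, by rw [pow_succ', h, smul_one_add_smul_mul]⟩

lemma exists_peval_lin (f : Polynomial F) (x : SplitOctonion F) :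
    ∃ a b : F, peval f x = a • 1 + b • x := by
  induction f using Polynomial.induction_on' with
  | add p q hp hq =>
      obtain ⟨a, b, hp⟩ := hp
      obtain ⟨c, d, hq⟩ := hq
      exact ⟨a + c, b + d, by rw [peval_add, hp, hq]; module⟩
  | monomial n c =>
      obtain ⟨a, b, h⟩ := exists_pow_lin x n
      exact ⟨c * a, c * b, by rw [peval_monomial, h, smul_add, smul_smul, smul_smul]⟩

end SplitOctonion

open SplitOctonion Polynomial in
/-- solutions of `f(x) = γ·1 + u₁`. -/
theorem peval_eq_smul_one_add_u1_iff {F : Type*} [Field F] [IsAlgClosed F]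
    (f : Polynomial F) (hf : f ≠ 0) (hf0 : f.coeff 0 = 0) (γ : F) (x : SplitOctonion F) :
    peval f x = γ • (1 : SplitOctonion F) + u1 ↔
      ∃ ξ₁ : F, f.eval ξ₁ = γ ∧ (derivative f).eval ξ₁ ≠ 0 ∧
        x = ξ₁ • (1 : SplitOctonion F) + ((derivative f).eval ξ₁)⁻¹ • u1 := by
  constructor
  · intro h
    obtain ⟨a, b, hab⟩ := exists_peval_lin f x
    rw [hab] at h
    have hu : b • x.u = ![1, 0, 0] := by
      have := congrArg SplitOctonion.u h
      simpa [u1] using this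
    have hu0 : b * x.u 0 = 1 := by simpa using congrFun hu 0
    have hb : b ≠ 0 := left_ne_zero_of_mul_eq_one hu0
    have hv : x.v = 0 := by
      have := congrArg SplitOctonion.v h
      simp [u1] at this
      exact this.resolve_left hb
    have hx1 : a + b * x.x1 = γ := by
      have := congrArg SplitOctonion.x1 h
      simpa [u1] using this
    have hx2 : a + b * x.x2 = γ := by
      have := congrArg SplitOctonion.x2 h
      simpa [u1] using this
    have hxx : x.x2 = x.x1 :=
      mul_left_cancel₀ hb (by linear_combination hx2 - hx1)
    have hx : x = sel x.x1 b⁻¹ := by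
      have hxu : x.u = b⁻¹ • ![1, 0, 0] := by
        rw [eq_inv_smul_iff₀ hb]; exact hu
      ext <;> simp [hxu, hv, hxx]
    have hsel : peval f x = sel γ 1 := by
      rw [hab, h, ← smul_one_add_smul_u1, one_smul]
    rw [hx, peval_sel] at hsel
    obtain ⟨h1, h2⟩ := sel_inj hsel
    have hd : (derivative f).eval x.x1 ≠ 0 := right_ne_zero_of_mul_eq_one h2
    refine ⟨x.x1, h1, hd, ?_⟩
    rw [smul_one_add_smul_u1, hx]
    exact sel_eq_sel rfl (inv_eq_of_mul_eq_one_left h2).symm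
  · rintro ⟨ξ, hγ, hd, rfl⟩
    rw [smul_one_add_smul_u1, peval_sel, hγ, inv_mul_cancel₀ hd,
      ← smul_one_add_smul_u1, one_smul]
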